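/- Threshold-integral characterization of OpenworldAUC: assuming r(x_b) (conditioned on correct classification events) has a continuous distribution, ∫₀¹ HitRate_n(t) d MissRate_b(t) = P[y_b = g(x_b)] · P[y_n = h(x_n)] · P[r(x_b) > r(x_n) | y_b = g(x_b), y_n = h(x_n)] = P[r(x_b) > r(x_n), y_b = g(x_b), y_n = h(x_n)], where MissRate_b(t) = P[r(x_b) ≤ t] + P[r(x_b) > t, y_b ≠ g(x_b)] and HitRate_n(t) = P[r(x_n) ≤ t, y_n = h(x_n)]. -/

import Mathlib

open MeasureTheory

/-- Threshold-integral characterization of OpenworldAUC: the Stieltjes integral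
`∫₀¹ HitRate_n(t) dMissRate_b(t)` equals
`P[correct_b] · P[correct_n] · P[rank | correct_b, correct_n]`, which equals the joint
probability `P[r(x_b) > r(x_n), y_b = g(x_b), y_n = h(x_n)]`. -/
theorem stmt_12 {Ωb Ωn : Type*} [MeasurableSpace Ωb] [MeasurableSpace Ωn]
    (μb : Measure Ωb) (μn : Measure Ωn)
    [IsProbabilityMeasure μb] [IsProbabilityMeasure μn]
    (Rb : Ωb → ℝ) (Rn : Ωn → ℝ) (Cb : Set Ωb) (Cn : Set Ωn)
    (hRb : Measurable Rb) (hRn : Measurable Rn)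
    (hCb : MeasurableSet Cb) (hCn : MeasurableSet Cn)
    (hrb : ∀ ω, Rb ω ∈ Set.Icc (0 : ℝ) 1) (hrn : ∀ ω, Rn ω ∈ Set.Icc (0 : ℝ) 1)
    (hcont : ∀ t : ℝ, μb {ω | Rb ω = t} = 0)
    (F : StieltjesFunction ℝ)
    (hF : ∀ t, F t = (μb {ω | Rb ω ≤ t}).toReal + (μb ({ω | t < Rb ω} ∩ Cbᶜ)).toReal) :
    (∫ t in Set.Icc (0 : ℝ) 1, (μn ({ω | Rn ω ≤ t} ∩ Cn)).toReal ∂F.measure)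
        = (μb Cb).toReal * (μn Cn).toReal *
          ((ProbabilityTheory.cond (μb.prod μn) (Cb ×ˢ Cn))
            {p | Rn p.2 < Rb p.1}).toReal
      ∧ (μb Cb).toReal * (μn Cn).toReal *
          ((ProbabilityTheory.cond (μb.prod μn) (Cb ×ˢ Cn))
            {p | Rn p.2 < Rb p.1}).toReal
        = ((μb.prod μn) ({p | Rn p.2 < Rb p.1} ∩ Cb ×ˢ Cn)).toReal := by
  classical
  have hone : ∀ s : Set Ωb, μb s ≠ ⊤ := fun s => measure_ne_top μb s
  have hone' : ∀ s : Set Ωn, μn s ≠ ⊤ := fun s => measure_ne_top μn s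
  -- measurable sets in the product
  have hS : MeasurableSet {p : Ωb × Ωn | Rn p.2 < Rb p.1} :=
    measurableSet_lt (hRn.comp measurable_snd) (hRb.comp measurable_fst)
  have hS' : MeasurableSet {p : Ωb × Ωn | Rn p.2 ≤ Rb p.1} :=
    measurableSet_le (hRn.comp measurable_snd) (hRb.comp measurable_fst)
  have hEm : MeasurableSet {p : Ωb × Ωn | Rb p.1 = Rn p.2} :=
    measurableSet_eq_fun (hRb.comp measurable_fst) (hRn.comp measurable_snd)
  -- F t = 1 - μb ({t < Rb} ∩ Cb)
  have hFval : ∀ t : ℝ, F t = 1 - (μb ({ω | t < Rb ω} ∩ Cb)).toReal := by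
    intro t
    have hle : MeasurableSet {ω | Rb ω ≤ t} := hRb measurableSet_Iic
    have h1 : μb {ω | Rb ω ≤ t} + μb {ω | t < Rb ω} = 1 := by
      have hc : {ω | t < Rb ω} = {ω | Rb ω ≤ t}ᶜ := by ext ω; simp [not_le]
      rw [hc, measure_add_measure_compl hle, measure_univ]
    have h2 : μb ({ω | t < Rb ω} ∩ Cbᶜ) + μb ({ω | t < Rb ω} ∩ Cb)
        = μb {ω | t < Rb ω} := by
      have h := measure_inter_add_diff (μ := μb) {ω | t < Rb ω} hCb.compl
      rwa [Set.diff_compl] at h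
    have h3 : μb {ω | Rb ω ≤ t} + (μb ({ω | t < Rb ω} ∩ Cbᶜ) + μb ({ω | t < Rb ω} ∩ Cb))
        = 1 := by rw [h2, h1]
    have h4 := congrArg ENNReal.toReal h3
    rw [ENNReal.toReal_add (hone _) (ENNReal.add_ne_top.2 ⟨hone _, hone _⟩),
        ENNReal.toReal_add (hone _) (hone _), ENNReal.toReal_one] at h4
    rw [hF t]; linarith
  -- the Stieltjes measure is the law of Rb restricted to Cb
  have hFm : F.measure = (μb.restrict Cb).map Rb := by
    refine Measure.ext_of_Ioc _ _ (fun a b hab => ?_)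
    rw [StieltjesFunction.measure_Ioc, Measure.map_apply hRb measurableSet_Ioc,
        Measure.restrict_apply (hRb measurableSet_Ioc)]
    have hsplit : μb ({ω | a < Rb ω} ∩ Cb)
        = μb (Rb ⁻¹' Set.Ioc a b ∩ Cb) + μb ({ω | b < Rb ω} ∩ Cb) := by
      rw [← measure_union ?_ (show MeasurableSet ({ω | b < Rb ω} ∩ Cb) from
        (hRb measurableSet_Ioi).inter hCb)]
      · congr 1
        ext ω
        simp only [Set.mem_inter_iff, Set.mem_preimage, Set.mem_Ioc, Set.mem_union,
          Set.mem_setOf_eq, Set.mem_Ioi]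
        constructor
        · rintro ⟨h1, h2⟩
          rcases le_or_gt (Rb ω) b with h | h
          · exact Or.inl ⟨⟨h1, h⟩, h2⟩
          · exact Or.inr ⟨h, h2⟩
        · rintro (⟨⟨h1, _⟩, h2⟩ | ⟨h1, h2⟩)
          · exact ⟨h1, h2⟩
          · exact ⟨lt_trans hab h1, h2⟩
      · rw [Set.disjoint_left]
        rintro ω ⟨hω, -⟩ ⟨hω2, -⟩
        exact absurd hω.2 (not_le.2 hω2)
    have heq : F b - F a = (μb (Rb ⁻¹' Set.Ioc a b ∩ Cb)).toReal := by
      rw [hFval a, hFval b, hsplit, ENNReal.toReal_add (hone _) (hone _)]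
      ring
    rw [heq, ENNReal.ofReal_toReal (hone _)]
  -- the Stieltjes measure is supported on [0,1]
  have h0 : F.measure ((Set.Icc (0 : ℝ) 1)ᶜ) = 0 := by
    rw [hFm, Measure.map_apply hRb measurableSet_Icc.compl,
      Measure.restrict_apply (hRb measurableSet_Icc.compl)]
    have hpre : Rb ⁻¹' (Set.Icc (0 : ℝ) 1)ᶜ = ∅ := by
      ext ω
      simp only [Set.mem_preimage, Set.mem_compl_iff, Set.mem_empty_iff_false, iff_false,
        not_not]
      exact hrb ω
    rw [hpre, Set.empty_inter, measure_empty]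
  have hres : F.measure.restrict (Set.Icc (0 : ℝ) 1) = F.measure := by
    refine Measure.restrict_eq_self_of_ae_mem ?_
    rw [MeasureTheory.ae_iff]
    exact h0
  -- the integrand and its monotonicity
  have hφmono : Monotone (fun t : ℝ => μn ({ω | Rn ω ≤ t} ∩ Cn)) := fun s t hst =>
    measure_mono (Set.inter_subset_inter_left _ (fun ω h => le_trans h hst))
  have hφ : Measurable (fun t : ℝ => μn ({ω | Rn ω ≤ t} ∩ Cn)) := hφmono.measurable
  have hfmono : Monotone (fun t : ℝ => (μn ({ω | Rn ω ≤ t} ∩ Cn)).toReal) := fun s t hst =>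
    ENNReal.toReal_mono (hone' _) (hφmono hst)
  have hg : Measurable fun ω => μn ({ω' | Rn ω' ≤ Rb ω} ∩ Cn) := hφ.comp hRb
  -- the diagonal is null
  have hE0 : (μb.prod μn) {p : Ωb × Ωn | Rb p.1 = Rn p.2} = 0 := by
    rw [Measure.prod_apply_symm hEm]
    have hz : ∀ ωn, μb ((fun x => (x, ωn)) ⁻¹' {p : Ωb × Ωn | Rb p.1 = Rn p.2}) = 0 :=
      fun ωn => hcont (Rn ωn)
    simp only [hz]
    exact lintegral_zero
  -- key integral computation
  have key : (∫ t in Set.Icc (0 : ℝ) 1, (μn ({ω | Rn ω ≤ t} ∩ Cn)).toReal ∂F.measure)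
      = ((μb.prod μn) ({p | Rn p.2 < Rb p.1} ∩ Cb ×ˢ Cn)).toReal := by
    rw [hres, hFm, integral_map hRb.aemeasurable hfmono.measurable.aestronglyMeasurable]
    rw [integral_toReal hg.aemeasurable
      (ae_of_all _ fun ω => lt_of_le_of_lt (measure_mono Set.inter_subset_right)
        (measure_lt_top μn Cn))]
    congr 1
    have h1 : ((μb.restrict Cb).prod (μn.restrict Cn)) {p : Ωb × Ωn | Rn p.2 ≤ Rb p.1}
        = ∫⁻ ω, μn ({ω' | Rn ω' ≤ Rb ω} ∩ Cn) ∂(μb.restrict Cb) := by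
      rw [Measure.prod_apply hS']
      congr 1
      ext ω
      rw [show Prod.mk ω ⁻¹' {p : Ωb × Ωn | Rn p.2 ≤ Rb p.1} = {ω' | Rn ω' ≤ Rb ω} from rfl,
        Measure.restrict_apply (show MeasurableSet {ω' | Rn ω' ≤ Rb ω} from
          hRn measurableSet_Iic)]
    rw [← h1, Measure.prod_restrict, Measure.restrict_apply hS']
    -- replace ≤ by < using the null diagonal
    apply le_antisymm
    · calc (μb.prod μn) ({p : Ωb × Ωn | Rn p.2 ≤ Rb p.1} ∩ Cb ×ˢ Cn)
          ≤ (μb.prod μn) (({p : Ωb × Ωn | Rn p.2 < Rb p.1} ∩ Cb ×ˢ Cn)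
              ∪ {p : Ωb × Ωn | Rb p.1 = Rn p.2}) := by
            refine measure_mono ?_
            rintro ⟨ωb, ωn⟩ ⟨h1, h2⟩
            rcases lt_or_eq_of_le (show Rn ωn ≤ Rb ωb from h1) with h | h
            · exact Or.inl ⟨h, h2⟩
            · exact Or.inr h.symm
        _ ≤ (μb.prod μn) ({p : Ωb × Ωn | Rn p.2 < Rb p.1} ∩ Cb ×ˢ Cn)
              + (μb.prod μn) {p : Ωb × Ωn | Rb p.1 = Rn p.2} := measure_union_le _ _
        _ = (μb.prod μn) ({p : Ωb × Ωn | Rn p.2 < Rb p.1} ∩ Cb ×ˢ Cn) := by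
            rw [hE0, add_zero]
    · refine measure_mono (Set.inter_subset_inter_left _ fun p hp => ?_)
      exact le_of_lt (show Rn p.2 < Rb p.1 from hp)
  -- second conjunct
  have hbox : (μb.prod μn) (Cb ×ˢ Cn) = μb Cb * μn Cn := Measure.prod_prod Cb Cn
  have hsecond : (μb Cb).toReal * (μn Cn).toReal *
      ((ProbabilityTheory.cond (μb.prod μn) (Cb ×ˢ Cn)) {p | Rn p.2 < Rb p.1}).toReal
      = ((μb.prod μn) ({p | Rn p.2 < Rb p.1} ∩ Cb ×ˢ Cn)).toReal := by
    rw [ProbabilityTheory.cond_apply (hCb.prod hCn), hbox, Set.inter_comm]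
    by_cases hz : μb Cb * μn Cn = 0
    · have hz2 : (μb.prod μn) ({p | Rn p.2 < Rb p.1} ∩ Cb ×ˢ Cn) = 0 :=
        measure_mono_null Set.inter_subset_right (by rw [hbox]; exact hz)
      rcases mul_eq_zero.1 hz with h | h <;> simp [hz2, h]
    · have hb0 : μb Cb ≠ 0 := fun h => hz (by rw [h, zero_mul])
      have hn0 : μn Cn ≠ 0 := fun h => hz (by rw [h, mul_zero])
      rw [ENNReal.toReal_mul, ENNReal.toReal_inv, ENNReal.toReal_mul]
      have hb' : (μb Cb).toReal ≠ 0 := ENNReal.toReal_ne_zero.2 ⟨hb0, hone _⟩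
      have hn' : (μn Cn).toReal ≠ 0 := ENNReal.toReal_ne_zero.2 ⟨hn0, hone' _⟩
      field_simp
  exact ⟨key.trans hsecond.symm, hsecond⟩
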